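/- Let t ≥ 2 and r ≥ 2 be integers and n = (t+1)r − t. Suppose the vertex set of K_n is partitioned into sets V_1, …, V_t with |V_1| = 2r − 1 and |V_i| = r − 1 for all i ≥ 2, and define the t-coloring χ of E(K_n) by χ(xy) = max{ i : V_i ∩ {x,y} ≠ ∅ }. Then for every color i ∈ {1,…,t}, there is no matching of size r in color i under χ. -/

import Mathlib

/-- A matching of size `r` in color `i`: a set of `r` pairwise vertex-disjoint
(non-loop) edges of `K_n`, each assigned color `i` by `χ`. -/
def IsColorMatching {n t : ℕ} (χ : Sym2 (Fin n) → Fin t) (i : Fin t) (r : ℕ) : Prop :=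
  ∃ M : Finset (Sym2 (Fin n)), M.card = r ∧
    (∀ e ∈ M, ¬ e.IsDiag ∧ χ e = i) ∧
    (∀ e ∈ M, ∀ f ∈ M, e ≠ f → ∀ v : Fin n, v ∈ e → v ∉ f)

/-- With `n = (t+1)r − t` and the vertex set of `K_n` partitioned into parts
`V_1, …, V_t` (here `p v` is the index of the part containing `v`, and part `0`
plays the role of `V_1`) with `|V_1| = 2r − 1` and `|V_i| = r − 1` for `i ≥ 2`,
the coloring `χ(xy) = max{i : V_i ∩ {x,y} ≠ ∅} = max (p x) (p y)` has no
monochromatic matching of size `r` in any color. -/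
theorem painter_coloring_no_matching (t r : ℕ) [NeZero t] (ht : 2 ≤ t) (hr : 2 ≤ r)
    (n : ℕ) (hn : n = (t + 1) * r - t)
    (p : Fin n → Fin t)
    (h1 : (Finset.univ.filter (fun v => p v = 0)).card = 2 * r - 1)
    (hi : ∀ i : Fin t, i ≠ 0 → (Finset.univ.filter (fun v => p v = i)).card = r - 1)
    (χ : Sym2 (Fin n) → Fin t)
    (hχ : ∀ x y : Fin n, x ≠ y → χ s(x, y) = max (p x) (p y)) :
    ∀ i : Fin t, ¬ IsColorMatching χ i r := by
  intro i hmatch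
  obtain ⟨M, hcard, hcol, hdisj⟩ := hmatch
  -- every edge of M has some endpoint with p = i, and if i = 0 both endpoints
  have hend : ∀ e ∈ M, ∀ v ∈ e, p v ≤ i := by
    intro e he
    induction e using Sym2.ind with
    | _ a b =>
      intro v hv
      have hd := (hcol _ he).1
      have hab : a ≠ b := by simpa [Sym2.isDiag_iff_proj_eq] using hd
      have hmax : max (p a) (p b) = i := by
        rw [← hχ a b hab]; exact (hcol _ he).2
      rcases Sym2.mem_iff.mp hv with rfl | rfl
      · exact hmax ▸ le_max_left _ _
      · exact hmax ▸ le_max_right _ _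
  have hexist : ∀ e ∈ M, ∃ v : Fin n, v ∈ e ∧ p v = i := by
    intro e he
    induction e using Sym2.ind with
    | _ a b =>
      have hd := (hcol _ he).1
      have hab : a ≠ b := by simpa [Sym2.isDiag_iff_proj_eq] using hd
      have hmax : max (p a) (p b) = i := by
        rw [← hχ a b hab]; exact (hcol _ he).2
      rcases max_choice (p a) (p b) with h | h
      · exact ⟨a, by simp, by rw [← hmax, h]⟩
      · exact ⟨b, by simp, by rw [← hmax, h]⟩
  by_cases hi0 : i = 0
  · -- color 0: both endpoints in V_0, so 2r vertices in a set of size 2r-1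
    subst hi0
    set S : Finset (Fin n) := M.biUnion (fun e => Finset.univ.filter (· ∈ e)) with hS
    have hScard : S.card = 2 * r := by
      rw [hS, Finset.card_biUnion]
      · have : ∀ e ∈ M, (Finset.univ.filter (· ∈ e)).card = 2 := by
          intro e he
          induction e using Sym2.ind with
          | _ a b =>
            have hab : a ≠ b := by
              simpa [Sym2.isDiag_iff_proj_eq] using (hcol _ he).1
            have : (Finset.univ.filter (· ∈ s(a, b))) = {a, b} := by
              ext v; simp [Sym2.mem_iff]
            rw [this, Finset.card_insert_of_notMem (by simp [hab]), Finset.card_singleton]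
        rw [Finset.sum_congr rfl this, Finset.sum_const, hcard]; ring
      · intro e he f hf hef
        rw [Function.onFun, Finset.disjoint_left]
        intro v hv hvf
        exact hdisj e he f hf hef v (by simpa using hv) (by simpa using hvf)
    have hsub : S ⊆ Finset.univ.filter (fun v => p v = 0) := by
      intro v hv
      rw [hS, Finset.mem_biUnion] at hv
      obtain ⟨e, he, hv⟩ := hv
      have := hend e he v (by simpa using hv)
      simp only [Finset.mem_filter, Finset.mem_univ, true_and]
      exact Fin.le_zero_iff'.mp this
    have := Finset.card_le_card hsub
    rw [hScard, h1] at this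
    omega
  · -- color i ≠ 0: each edge has an endpoint in V_i, disjoint, so r ≤ r - 1
    have hviable : ∀ e ∈ M, ∃ v : Fin n, v ∈ e ∧ p v = i := hexist
    have hn0 : 0 < n := by
      have := Nat.mul_le_mul_left (t + 1) hr
      omega
    haveI : Inhabited (Fin n) := ⟨⟨0, hn0⟩⟩
    classical
    set f : Sym2 (Fin n) → Fin n := fun e =>
      if h : ∃ v : Fin n, v ∈ e ∧ p v = i then h.choose else default with hf
    have hfmem : ∀ e ∈ M, f e ∈ e ∧ p (f e) = i := by
      intro e he
      have h := hviable e he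
      simp only [hf, dif_pos h]
      exact h.choose_spec
    have hinj : Set.InjOn f M := by
      intro e he g hg hfe
      by_contra hne
      exact hdisj e he g hg hne (f e) (hfmem e he).1 (hfe ▸ (hfmem g hg).1)
    have hmaps : ∀ e ∈ M, f e ∈ Finset.univ.filter (fun v => p v = i) := by
      intro e he
      simp [(hfmem e he).2]
    have := Finset.card_le_card_of_injOn f hmaps hinj
    rw [hcard, hi i hi0] at this
    omega
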